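/- arXiv:0705.0038 — 3 statements merged into one kernel-verified Lean document; each statement's English description precedes it below -/
import Mathlib

section
/- Let k ≥ 1 and let a₁, …, a_k be positive integers with product n = a₁ a₂ ⋯ a_k, and let U be a finite set with |U| = n. Then the number of k-rectangles (π₁, …, π_k) on U such that π_i has exactly a_i blocks for each i equals the multinomial coefficient n! / (a₁! a₂! ⋯ a_k!). -/
open Finset Function

/-- A `k`-rectangle on a finite set `U` with respect to block counts
`a : Fin k → ℕ`: a `k`-tuple of partitions of `U` such that the `i`-th partition
has `a i` blocks, each of size `|U| / a i`, and every choice of one block from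
each partition intersects in exactly one element. -/
def IsKRectangle {U : Type} [Fintype U] [DecidableEq U] {k : ℕ} (a : Fin k → ℕ)
    (π : Fin k → Finpartition (Finset.univ : Finset U)) : Prop :=
  (∀ i, (π i).parts.card = a i) ∧
  (∀ i, ∀ B ∈ (π i).parts, B.card = Fintype.card U / a i) ∧
  (∀ B : Fin k → Finset U, (∀ i, B i ∈ (π i).parts) →
    (Finset.univ.inf B).card = 1)


section Aux

variable {U : Type} [Fintype U] [DecidableEq U] {k : ℕ} {a : Fin k → ℕ}

/-- The fiber of the `i`-th coordinate of `e` over `j`. -/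
def fiberPart (e : U ≃ (∀ i, Fin (a i))) (i : Fin k) (j : Fin (a i)) : Finset U :=
  univ.filter fun x => e x i = j

lemma mem_fiberPart {e : U ≃ (∀ i, Fin (a i))} {i : Fin k} {j : Fin (a i)} {x : U} :
    x ∈ fiberPart e i j ↔ e x i = j := by simp [fiberPart]

lemma fiberPart_nonempty (ha : ∀ i, 0 < a i) (e : U ≃ (∀ i, Fin (a i))) (i : Fin k)
    (j : Fin (a i)) : (fiberPart e i j).Nonempty := by
  refine ⟨e.symm (Function.update (fun i' => (⟨0, ha i'⟩ : Fin (a i'))) i j), ?_⟩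
  rw [mem_fiberPart, Equiv.apply_symm_apply, Function.update_self]

lemma fiberPart_injective (ha : ∀ i, 0 < a i) (e : U ≃ (∀ i, Fin (a i))) (i : Fin k) :
    Function.Injective (fiberPart e i) := by
  intro j j' h
  obtain ⟨x, hx⟩ := fiberPart_nonempty ha e i j
  have hx' : x ∈ fiberPart e i j' := h ▸ hx
  rw [mem_fiberPart] at hx hx'
  rw [← hx, hx']

lemma fiberPart_card (ha : ∀ i, 0 < a i) (e : U ≃ (∀ i, Fin (a i))) (i : Fin k)
    (j j' : Fin (a i)) : (fiberPart e i j).card = (fiberPart e i j').card := by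
  refine Finset.card_bij' (fun x _ => e.symm (Function.update (e x) i j'))
    (fun x _ => e.symm (Function.update (e x) i j)) ?_ ?_ ?_ ?_
  · intro x hx
    rw [mem_fiberPart, Equiv.apply_symm_apply, Function.update_self]
  · intro x hx
    rw [mem_fiberPart, Equiv.apply_symm_apply, Function.update_self]
  · intro x hx
    rw [mem_fiberPart] at hx
    show e.symm (update (e (e.symm (update (e x) i j'))) i j) = x
    rw [Equiv.apply_symm_apply, Function.update_idem, ← hx, Function.update_eq_self,
      Equiv.symm_apply_apply]
  · intro x hx
    rw [mem_fiberPart] at hx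
    show e.symm (update (e (e.symm (update (e x) i j))) i j') = x
    rw [Equiv.apply_symm_apply, Function.update_idem, ← hx, Function.update_eq_self,
      Equiv.symm_apply_apply]

/-- The `i`-th partition associated to a bijection `e : U ≃ ∀ i, Fin (a i)`. -/
def rectOfEquiv (ha : ∀ i, 0 < a i) (e : U ≃ (∀ i, Fin (a i))) (i : Fin k) :
    Finpartition (univ : Finset U) where
  parts := univ.image (fiberPart e i)
  supIndep := by
    rw [Finset.supIndep_iff_pairwiseDisjoint]
    rintro B hB C hC hBC
    simp only [coe_image, Set.mem_image, coe_univ, Set.image_univ, Set.mem_range] at hB hC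
    obtain ⟨j, rfl⟩ := hB
    obtain ⟨j', rfl⟩ := hC
    refine Finset.disjoint_left.2 fun x hx hx' => hBC ?_
    simp only [id_eq] at hx hx'
    rw [mem_fiberPart] at hx hx'
    rw [← hx, hx']
  sup_parts := by
    refine le_antisymm le_top fun x _ => ?_
    rw [Finset.mem_sup]
    exact ⟨fiberPart e i (e x i), Finset.mem_image_of_mem _ (mem_univ _),
      by simp only [id_eq]; exact mem_fiberPart.2 rfl⟩
  bot_notMem := by
    simp only [bot_eq_empty, Finset.mem_image]
    rintro ⟨j, -, hj⟩
    obtain ⟨x, hx⟩ := fiberPart_nonempty ha e i j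
    rw [hj] at hx
    exact absurd hx (Finset.notMem_empty x)

lemma rectOfEquiv_parts (ha : ∀ i, 0 < a i) (e : U ≃ (∀ i, Fin (a i))) (i : Fin k) :
    (rectOfEquiv ha e i).parts = univ.image (fiberPart e i) := rfl

lemma rectOfEquiv_parts_card (ha : ∀ i, 0 < a i) (e : U ≃ (∀ i, Fin (a i))) (i : Fin k) :
    (rectOfEquiv ha e i).parts.card = a i := by
  rw [rectOfEquiv_parts, Finset.card_image_of_injective _ (fiberPart_injective ha e i),
    Finset.card_univ, Fintype.card_fin]

lemma rectOfEquiv_block_card (ha : ∀ i, 0 < a i) (e : U ≃ (∀ i, Fin (a i))) (i : Fin k)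
    {B : Finset U} (hB : B ∈ (rectOfEquiv ha e i).parts) :
    B.card = Fintype.card U / a i := by
  rw [rectOfEquiv_parts, Finset.mem_image] at hB
  obtain ⟨j, -, rfl⟩ := hB
  have hsum : ∑ j' : Fin (a i), (fiberPart e i j').card = Fintype.card U := by
    rw [← Finset.card_univ (α := U), ← (rectOfEquiv ha e i).sum_card_parts,
      rectOfEquiv_parts, Finset.sum_image]
    intro x _ y _ h
    exact fiberPart_injective ha e i h
  have : ∑ j' : Fin (a i), (fiberPart e i j').card = a i * (fiberPart e i j).card := by
    rw [Finset.sum_congr rfl (fun j' _ => fiberPart_card ha e i j' j),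
      Finset.sum_const, Finset.card_univ, Fintype.card_fin, smul_eq_mul]
  symm
  exact Nat.div_eq_of_eq_mul_left (ha i) (by rw [← hsum, this, Nat.mul_comm])

lemma rectOfEquiv_inter (ha : ∀ i, 0 < a i) (e : U ≃ (∀ i, Fin (a i)))
    (B : Fin k → Finset U) (hB : ∀ i, B i ∈ (rectOfEquiv ha e i).parts) :
    (univ.inf B).card = 1 := by
  choose j hj using fun i => Finset.mem_image.1 (hB i)
  have hB' : ∀ i, B i = fiberPart e i (j i) := fun i => ((hj i).2).symm
  have : univ.inf B = {e.symm j} := by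
    ext x
    simp only [Finset.mem_inf, Finset.mem_singleton]
    constructor
    · intro h
      have : ∀ i, e x i = j i := fun i => mem_fiberPart.1 (hB' i ▸ h i (mem_univ i))
      rw [← funext this, Equiv.symm_apply_apply]
    · rintro rfl i -
      rw [hB' i, mem_fiberPart, Equiv.apply_symm_apply]
  rw [this, Finset.card_singleton]

lemma isKRectangle_rectOfEquiv (ha : ∀ i, 0 < a i) (e : U ≃ (∀ i, Fin (a i))) :
    IsKRectangle a (fun i => rectOfEquiv ha e i) :=
  ⟨rectOfEquiv_parts_card ha e, fun i B hB => rectOfEquiv_block_card ha e i hB,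
    rectOfEquiv_inter ha e⟩

/-- Twisting a bijection by coordinatewise permutations. -/
def twist (g : ∀ i, Equiv.Perm (Fin (a i))) (e : U ≃ (∀ i, Fin (a i))) :
    U ≃ (∀ i, Fin (a i)) := e.trans (Equiv.piCongrRight g)

lemma twist_apply (g : ∀ i, Equiv.Perm (Fin (a i))) (e : U ≃ (∀ i, Fin (a i))) (x : U)
    (i : Fin k) : twist g e x i = g i (e x i) := rfl

lemma fiberPart_twist (g : ∀ i, Equiv.Perm (Fin (a i))) (e : U ≃ (∀ i, Fin (a i)))
    (i : Fin k) (j : Fin (a i)) :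
    fiberPart (twist g e) i j = fiberPart e i ((g i).symm j) := by
  ext x
  rw [mem_fiberPart, mem_fiberPart, twist_apply, Equiv.apply_eq_iff_eq_symm_apply]

lemma rectOfEquiv_twist (ha : ∀ i, 0 < a i) (g : ∀ i, Equiv.Perm (Fin (a i)))
    (e : U ≃ (∀ i, Fin (a i))) (i : Fin k) :
    rectOfEquiv ha (twist g e) i = rectOfEquiv ha e i := by
  refine Finpartition.ext ?_
  rw [rectOfEquiv_parts, rectOfEquiv_parts]
  ext B
  simp only [Finset.mem_image, mem_univ, true_and]
  constructor
  · rintro ⟨j, rfl⟩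
    exact ⟨(g i).symm j, (fiberPart_twist g e i j).symm⟩
  · rintro ⟨j, rfl⟩
    exact ⟨g i j, by rw [fiberPart_twist, Equiv.symm_apply_apply]⟩

lemma twist_injective (ha : ∀ i, 0 < a i) (e : U ≃ (∀ i, Fin (a i))) :
    Function.Injective (fun g : ∀ i, Equiv.Perm (Fin (a i)) => twist g e) := by
  intro g g' h
  funext i
  refine Equiv.ext fun j => ?_
  obtain ⟨x, hx⟩ := fiberPart_nonempty ha e i j
  rw [mem_fiberPart] at hx
  have h2 : twist g e x i = twist g' e x i := by
    rw [show twist g e = twist g' e from h]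
  rw [twist_apply, twist_apply, hx] at h2
  exact h2

lemma exists_twist_of_rectOfEquiv_eq (ha : ∀ i, 0 < a i) (e e' : U ≃ (∀ i, Fin (a i)))
    (h : ∀ i, rectOfEquiv ha e i = rectOfEquiv ha e' i) :
    ∃ g : ∀ i, Equiv.Perm (Fin (a i)), e' = twist g e := by
  have key : ∀ i (j : Fin (a i)), ∃ j', fiberPart e i j = fiberPart e' i j' := by
    intro i j
    have : fiberPart e i j ∈ (rectOfEquiv ha e' i).parts := by
      rw [← h i, rectOfEquiv_parts]
      exact Finset.mem_image_of_mem _ (mem_univ j)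
    rw [rectOfEquiv_parts, Finset.mem_image] at this
    obtain ⟨j', -, hj'⟩ := this
    exact ⟨j', hj'.symm⟩
  choose f hf using key
  have hinj : ∀ i, Function.Injective (f i) := by
    intro i j j' hjj'
    refine fiberPart_injective ha e i ?_
    rw [hf i j, hf i j', hjj']
  have hbij : ∀ i, Function.Bijective (f i) :=
    fun i => Finite.injective_iff_bijective.1 (hinj i)
  refine ⟨fun i => Equiv.ofBijective (f i) (hbij i), ?_⟩
  refine Equiv.ext fun x => funext fun i => ?_
  have hx : x ∈ fiberPart e i (e x i) := mem_fiberPart.2 rfl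
  rw [hf i (e x i), mem_fiberPart] at hx
  rw [twist_apply, hx]
  rfl

lemma surj_rectOfEquiv (ha : ∀ i, 0 < a i) (hU : Fintype.card U = ∏ i, a i)
    (π : Fin k → Finpartition (univ : Finset U)) (hπ : IsKRectangle a π) :
    ∃ e : U ≃ (∀ i, Fin (a i)), ∀ i, rectOfEquiv ha e i = π i := by
  classical
  have hcard : ∀ i, Fintype.card ((π i).parts : Finset (Finset U)) = a i := fun i => by
    rw [Fintype.card_coe, hπ.1 i]
  let σ : ∀ i, ((π i).parts : Finset (Finset U)) ≃ Fin (a i) :=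
    fun i => Fintype.equivFinOfCardEq (hcard i)
  let f : U → ∀ i, Fin (a i) :=
    fun x i => σ i ⟨(π i).part x, (π i).part_mem.2 (mem_univ x)⟩
  have hfinj : Function.Injective f := by
    intro x y hxy
    have hpart : ∀ i, (π i).part x = (π i).part y := by
      intro i
      exact Subtype.ext_iff.1 ((σ i).injective (congrFun hxy i))
    have hcard1 := hπ.2.2 (fun i => (π i).part x)
      (fun i => (π i).part_mem.2 (mem_univ x))
    have hx : x ∈ univ.inf (fun i => (π i).part x) :=
      Finset.mem_inf.2 fun i _ => (π i).mem_part (mem_univ x)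
    have hy : y ∈ univ.inf (fun i => (π i).part x) :=
      Finset.mem_inf.2 fun i _ => by
        rw [hpart i]; exact (π i).mem_part (mem_univ y)
    exact Finset.card_le_one.1 (le_of_eq hcard1) x hx y hy
  have hbij : Function.Bijective f :=
    (Fintype.bijective_iff_injective_and_card f).2
      ⟨hfinj, by rw [hU, Fintype.card_pi]; simp⟩
  refine ⟨Equiv.ofBijective f hbij, fun i => Finpartition.ext ?_⟩
  have hfib : ∀ (j : Fin (a i)),
      fiberPart (Equiv.ofBijective f hbij) i j = (((σ i).symm j : ((π i).parts : Finset (Finset U))) : Finset U) := by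
    intro j
    ext x
    rw [mem_fiberPart]
    show f x i = j ↔ _
    rw [show f x i = σ i ⟨(π i).part x, (π i).part_mem.2 (mem_univ x)⟩ from rfl,
      Equiv.apply_eq_iff_eq_symm_apply]
    constructor
    · intro h
      have h' : (π i).part x = (((σ i).symm j : ((π i).parts : Finset (Finset U))) : Finset U) :=
        congrArg Subtype.val h
      rw [← h']
      exact (π i).mem_part (mem_univ x)
    · intro hx
      exact Subtype.ext ((π i).part_eq_of_mem ((σ i).symm j).2 hx)
  rw [rectOfEquiv_parts]
  ext B
  simp only [Finset.mem_image, mem_univ, true_and]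
  constructor
  · rintro ⟨j, rfl⟩
    rw [hfib]
    exact ((σ i).symm j).2
  · intro hB
    exact ⟨σ i ⟨B, hB⟩, by rw [hfib, Equiv.symm_apply_apply]⟩

end Aux

/-- The number of `k`-rectangles `(π₁, …, π_k)` on a set of size
`n = a₁ a₂ ⋯ a_k` such that `π_i` has exactly `a_i` blocks is the multinomial
coefficient `n! / (a₁! a₂! ⋯ a_k!)`. -/
theorem card_kRectangles {U : Type} [Fintype U] [DecidableEq U] (k : ℕ)
    (hk : 1 ≤ k) (a : Fin k → ℕ) (ha : ∀ i, 0 < a i)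
    (hU : Fintype.card U = ∏ i, a i) :
    Nat.card {π : Fin k → Finpartition (Finset.univ : Finset U) //
        IsKRectangle a π} =
      (Fintype.card U).factorial / ∏ i, (a i).factorial := by
  classical
  have hVU : Fintype.card (∀ i, Fin (a i)) = Fintype.card U := by
    rw [hU, Fintype.card_pi]; simp
  let R := {π : Fin k → Finpartition (Finset.univ : Finset U) // IsKRectangle a π}
  let Φ : (U ≃ (∀ i, Fin (a i))) → R :=
    fun e => ⟨fun i => rectOfEquiv ha e i, isKRectangle_rectOfEquiv ha e⟩
  have hΦsurj : Function.Surjective Φ := by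
    rintro ⟨π, hπ⟩
    obtain ⟨e, he⟩ := surj_rectOfEquiv ha hU π hπ
    exact ⟨e, Subtype.ext (funext he)⟩
  have fibEquiv : ∀ r : R,
      Nonempty ({e // Φ e = r} ≃ (∀ i, Equiv.Perm (Fin (a i)))) := by
    intro r
    obtain ⟨e₀, he₀⟩ := hΦsurj r
    have hto : ∀ g : ∀ i, Equiv.Perm (Fin (a i)), Φ (twist g e₀) = r := by
      intro g
      rw [← he₀]
      exact Subtype.ext (funext fun i => rectOfEquiv_twist ha g e₀ i)
    refine ⟨(Equiv.ofBijective
      (fun g => (⟨twist g e₀, hto g⟩ : {e // Φ e = r})) ⟨?_, ?_⟩).symm⟩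
    · intro g g' h
      exact twist_injective ha e₀ (congrArg Subtype.val h)
    · rintro ⟨e, he⟩
      have heq : ∀ i, rectOfEquiv ha e₀ i = rectOfEquiv ha e i := by
        intro i
        have h2 : Φ e = Φ e₀ := he.trans he₀.symm
        exact (congrFun (congrArg Subtype.val h2) i).symm
      obtain ⟨g, hg⟩ := exists_twist_of_rectOfEquiv_eq ha e₀ e heq
      exact ⟨g, Subtype.ext hg.symm⟩
  have main : Nat.card (U ≃ (∀ i, Fin (a i))) =
      Nat.card R * Nat.card (∀ i, Equiv.Perm (Fin (a i))) := by
    have e1 : (U ≃ (∀ i, Fin (a i))) ≃ Σ r : R, {e // Φ e = r} :=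
      (Equiv.sigmaFiberEquiv Φ).symm
    have e2 : (Σ r : R, {e // Φ e = r}) ≃ R × (∀ i, Equiv.Perm (Fin (a i))) :=
      (Equiv.sigmaCongrRight fun r => (fibEquiv r).some).trans
        (Equiv.sigmaEquivProd _ _)
    rw [Nat.card_congr (e1.trans e2), Nat.card_prod]
  have hE : Nat.card (U ≃ (∀ i, Fin (a i))) = (Fintype.card U).factorial := by
    rw [Nat.card_eq_fintype_card, Fintype.card_equiv (Fintype.equivOfCardEq hVU.symm)]
  have hG : Nat.card (∀ i, Equiv.Perm (Fin (a i))) = ∏ i, (a i).factorial := by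
    rw [Nat.card_eq_fintype_card, Fintype.card_pi]
    exact Finset.prod_congr rfl fun i _ => by rw [Fintype.card_perm, Fintype.card_fin]
  rw [hE, hG] at main
  exact (Nat.div_eq_of_eq_mul_left
    (Finset.prod_pos fun i _ => Nat.factorial_pos _) main).symm
end

section
/- (Cauchy–Frobenius lemma for product groups.) Let M and N be finite groups and suppose the product group M × N acts on a finite set S. The subgroup M = M × {1} acts on S, and each g ∈ N permutes the set of M-orbits of S via the action of (1, g). Then for every g ∈ N, the number of M-orbits O with (1,g)·O = O equals (1/|M|) · ∑_{f ∈ M} fix(f, g), where fix(f, g) is the number of elements s ∈ S with (f, g)·s = s. Equivalently, |M| · #{M-orbits fixed setwise by (1,g)} = ∑_{f ∈ M} #{s ∈ S : (f,g)·s = s}. -/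
open Pointwise

/-- **Cauchy–Frobenius lemma for product groups.**  Let a finite product group
`M × N` act on a finite set `S`, and let `g ∈ N`.  Then
`|M| · #{M-orbits fixed setwise by (1, g)} = ∑_{f ∈ M} #{s ∈ S : (f, g) • s = s}`,
where an `M`-orbit is a set of the form `{t | ∃ m : M, (m, 1) • s = t}`. -/
theorem cauchy_frobenius_product_group {M N S : Type} [Group M] [Group N]
    [Fintype M] [Fintype N] [Fintype S] [MulAction (M × N) S] (g : N) :
    Fintype.card M *
        Nat.card {O : Set S //
          (∃ s : S, O = {t | ∃ m : M, ((m, (1 : N)) : M × N) • s = t}) ∧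
          (fun s => (((1 : M), g) : M × N) • s) '' O = O} =
      ∑ f : M, Nat.card {s : S // ((f, g) : M × N) • s = s} := by
  classical
  letI : MulAction M S := MulAction.compHom S (MonoidHom.inl M N)
  have hsmul : ∀ (m : M) (s : S), m • s = ((m, (1 : N)) : M × N) • s := fun _ _ => rfl
  have hcomm : ∀ (m : M) (s : S),
      (((1 : M), g) : M × N) • (m • s) = m • ((((1 : M), g) : M × N) • s) := by
    intro m s
    rw [hsmul, hsmul, smul_smul, smul_smul, Prod.mk_mul_mk, Prod.mk_mul_mk,
      one_mul, mul_one, one_mul, mul_one]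
  have horb : ∀ s : S, {t | ∃ m : M, ((m, (1 : N)) : M × N) • s = t} = MulAction.orbit M s := by
    intro s; ext t
    simp only [Set.mem_setOf_eq, MulAction.mem_orbit_iff, hsmul]
  -- the fixedness predicate on points
  set Fix : S → Prop := fun s => (((1 : M), g) : M × N) • s ∈ MulAction.orbit M s with hFix
  have himage : ∀ s : S,
      (fun x => (((1 : M), g) : M × N) • x) '' MulAction.orbit M s
        = MulAction.orbit M ((((1 : M), g) : M × N) • s) := by
    intro s; ext t
    simp only [Set.mem_image, MulAction.mem_orbit_iff]
    constructor
    · rintro ⟨x, ⟨m, rfl⟩, rfl⟩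
      exact ⟨m, (hcomm m s).symm⟩
    · rintro ⟨m, rfl⟩
      exact ⟨m • s, ⟨m, rfl⟩, hcomm m s⟩
  have hfixiff : ∀ s : S,
      ((fun x => (((1 : M), g) : M × N) • x) '' MulAction.orbit M s = MulAction.orbit M s)
        ↔ Fix s := by
    intro s; rw [himage, MulAction.orbit_eq_iff]
  -- pointwise count
  set F : S → ℕ := fun s => if Fix s then Nat.card (MulAction.stabilizer M s) else 0 with hF
  have key : ∀ s : S,
      (Finset.univ.filter fun f : M => ((f, g) : M × N) • s = s).card = F s := by
    intro s
    by_cases h : Fix s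
    · rw [hF]
      simp only [if_pos h]
      obtain ⟨m₀, hm₀⟩ := h
      have hm₀' : m₀ • s = (((1 : M), g) : M × N) • s := hm₀
      rw [Nat.card_eq_fintype_card, Fintype.card_subtype]
      apply Finset.card_bij (fun f _ => f * m₀)
      · intro f hf
        simp only [Finset.mem_filter, Finset.mem_univ, true_and] at hf ⊢
        have : (f * m₀) • s = f • ((((1 : M), g) : M × N) • s) := by
          rw [mul_smul, hm₀']
        rw [MulAction.mem_stabilizer_iff, this, hsmul, smul_smul, Prod.mk_mul_mk,
          mul_one, one_mul] at *
        exact hf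
      · intro a _ b _ hab
        exact mul_right_cancel hab
      · intro k hk
        simp only [Finset.mem_filter, Finset.mem_univ, true_and,
          MulAction.mem_stabilizer_iff] at hk
        refine ⟨k * m₀⁻¹, ?_, by group⟩
        simp only [Finset.mem_filter, Finset.mem_univ, true_and]
        have h1 : ((k * m₀⁻¹, g) : M × N) • s = (k * m₀⁻¹) • ((((1 : M), g) : M × N) • s) := by
          rw [hsmul, smul_smul, Prod.mk_mul_mk, mul_one, one_mul]
        rw [h1, ← hm₀', smul_smul, mul_assoc, inv_mul_cancel, mul_one]
        exact hk
    · rw [hF]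
      simp only [if_neg h, Finset.card_eq_zero, Finset.filter_eq_empty_iff]
      intro f _ hf
      exact absurd ⟨f⁻¹, show f⁻¹ • s = (((1 : M), g) : M × N) • s by
        conv_lhs => rw [hsmul, ← hf]
        rw [smul_smul, Prod.mk_mul_mk, inv_mul_cancel, one_mul]⟩ h
  -- rewrite the RHS as a sum over S
  have hRHS : (∑ f : M, Nat.card {s : S // ((f, g) : M × N) • s = s}) = ∑ s : S, F s := by
    calc (∑ f : M, Nat.card {s : S // ((f, g) : M × N) • s = s})
        = ∑ f : M, (Finset.univ.filter fun s : S => ((f, g) : M × N) • s = s).card := by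
          refine Finset.sum_congr rfl fun f _ => ?_
          rw [Nat.card_eq_fintype_card, Fintype.card_subtype]
      _ = ∑ f : M, ∑ s : S, if ((f, g) : M × N) • s = s then 1 else 0 := by
          refine Finset.sum_congr rfl fun f _ => ?_
          rw [Finset.card_filter]
      _ = ∑ s : S, ∑ f : M, if ((f, g) : M × N) • s = s then 1 else 0 := Finset.sum_comm
      _ = ∑ s : S, F s := by
          refine Finset.sum_congr rfl fun s _ => ?_
          rw [← key s, Finset.card_filter]
  rw [hRHS]
  have horbstab : ∀ s : S, Nat.card (MulAction.orbit M s) * Nat.card (MulAction.stabilizer M s)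
      = Fintype.card M := by
    intro s
    have h := MulAction.card_orbit_mul_card_stabilizer_eq_card_group M s
    rw [← Nat.card_eq_fintype_card (α := MulAction.orbit M s),
      ← Nat.card_eq_fintype_card (α := MulAction.stabilizer M s)] at h
    exact h
  -- now handle the LHS via the orbit space
  set Ω := MulAction.orbitRel.Quotient M S with hΩ
  have hcardfix : Nat.card {O : Set S //
      (∃ s : S, O = {t | ∃ m : M, ((m, (1 : N)) : M × N) • s = t}) ∧
      (fun s => (((1 : M), g) : M × N) • s) '' O = O}
      = Nat.card {ω : Ω // (fun s => (((1 : M), g) : M × N) • s) '' ω.orbit = ω.orbit} := by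
    refine (Nat.card_congr (Equiv.ofBijective
      (fun ω => ⟨ω.1.orbit, ⟨ω.1.out, by
        rw [horb, MulAction.orbitRel.Quotient.orbit_eq_orbit_out _ Quotient.out_eq']⟩, ω.2⟩)
      ⟨?_, ?_⟩)).symm
    · rintro ⟨ω₁, h₁⟩ ⟨ω₂, h₂⟩ h
      simpa [MulAction.orbitRel.Quotient.orbit_inj] using congrArg Subtype.val h
    · rintro ⟨O, ⟨s, rfl⟩, hO⟩
      refine ⟨⟨Quotient.mk'' s, ?_⟩, ?_⟩
      · rw [MulAction.orbitRel.Quotient.orbit_mk, ← horb]; exact hO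
      · simp only [Subtype.mk_eq_mk, MulAction.orbitRel.Quotient.orbit_mk, ← horb]
  rw [hcardfix]
  -- sum over fibers of the quotient map
  have hfiber : (∑ s : S, F s)
      = ∑ ω : Ω, ∑ s ∈ Finset.univ.filter
          (fun s : S => (Quotient.mk'' s : Ω) = ω), F s := by
    rw [Finset.sum_fiberwise]
  rw [hfiber]
  have hinner : ∀ ω : Ω, (∑ s ∈ Finset.univ.filter
      (fun s : S => (Quotient.mk'' s : Ω) = ω), F s)
      = if (fun s => (((1 : M), g) : M × N) • s) '' ω.orbit = ω.orbit
          then Fintype.card M else 0 := by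
    intro ω
    by_cases hsw : (fun s => (((1 : M), g) : M × N) • s) '' ω.orbit = ω.orbit
    · rw [if_pos hsw]
      have hconst : ∀ s ∈ Finset.univ.filter (fun s : S => (Quotient.mk'' s : Ω) = ω),
          F s = Nat.card (MulAction.stabilizer M ω.out) := by
        intro s hs
        simp only [Finset.mem_filter, Finset.mem_univ, true_and] at hs
        have horbs : MulAction.orbit M s = ω.orbit := by
          rw [← hs, MulAction.orbitRel.Quotient.orbit_mk]
        have hfix : Fix s := by rw [← hfixiff, horbs]; exact hsw
        have hrel : MulAction.orbitRel M S s ω.out := by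
          exact Quotient.exact' (by rw [hs]; exact (Quotient.out_eq' ω).symm)
        rw [hF]; simp only [if_pos hfix]
        exact Nat.card_congr (MulAction.stabilizerEquivStabilizerOfOrbitRel hrel).toEquiv
      rw [Finset.sum_congr rfl hconst, Finset.sum_const, smul_eq_mul]
      have hcard : (Finset.univ.filter (fun s : S => (Quotient.mk'' s : Ω) = ω)).card
          = Nat.card (MulAction.orbit M ω.out) := by
        rw [← Fintype.card_subtype, ← Nat.card_eq_fintype_card]
        refine Nat.card_congr (Equiv.subtypeEquivRight fun s => ?_)
        rw [← MulAction.orbitRel.Quotient.mem_orbit,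
          MulAction.orbitRel.Quotient.orbit_eq_orbit_out _ Quotient.out_eq']
      rw [hcard]
      exact horbstab ω.out
    · rw [if_neg hsw]
      refine Finset.sum_eq_zero fun s hs => ?_
      simp only [Finset.mem_filter, Finset.mem_univ, true_and] at hs
      have horbs : MulAction.orbit M s = ω.orbit := by
        rw [← hs, MulAction.orbitRel.Quotient.orbit_mk]
      have hfix : ¬ Fix s := by rw [← hfixiff, horbs]; exact hsw
      rw [hF]; simp only [if_neg hfix]
  rw [Finset.sum_congr rfl fun ω _ => hinner ω, Finset.sum_ite, Finset.sum_const,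
    Finset.sum_const_zero, add_zero, smul_eq_mul, Nat.card_eq_fintype_card,
    Fintype.card_subtype, mul_comm]
end

section
/- Let m ≥ 1, n ≥ 1, let α be the cyclic permutation of Fin m given by α(i) = i + 1 (mod m) (an m-cycle), and let τ : Fin m → Perm(Fin n) be any function. Define the permutation T of the set of functions f : Fin m → Fin n by (T f)(i) = τ(i)( f(α⁻¹ i) ). Then the number of functions f fixed by T equals the number of points of Fin n fixed by the composite permutation τ(m−1) ∘ τ(m−2) ∘ ⋯ ∘ τ(1) ∘ τ(0). -/
section Aux
variable {m n : ℕ} (τ : Fin (m+1) → Equiv.Perm (Fin n))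

private def Pprod (k : ℕ) : Equiv.Perm (Fin n) := ((List.ofFn τ).take k).reverse.prod

private lemma Pprod_succ (k : ℕ) (h : k < m + 1) :
    Pprod τ (k+1) = τ ⟨k, h⟩ * Pprod τ k := by
  unfold Pprod
  rw [List.take_succ]
  have : (List.ofFn τ)[k]? = some (τ ⟨k, h⟩) := by
    rw [List.getElem?_eq_getElem (by simpa using h)]
    simp only [List.getElem_ofFn]
  rw [this, Option.toList_some, List.reverse_append, List.reverse_singleton,
    List.singleton_append, List.prod_cons]

private lemma Pprod_top : Pprod τ (m+1) = (List.ofFn τ).reverse.prod := by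
  unfold Pprod
  rw [List.take_of_length_le (by simp)]

private lemma rot_inv_zero : ((finRotate (m+1))⁻¹ (0 : Fin (m+1))) = Fin.last m := by
  rw [Equiv.Perm.inv_eq_iff_eq]
  rw [finRotate_succ_apply]
  exact (Fin.last_add_one m).symm

private lemma rot_inv_succ (k : ℕ) (h : k + 1 < m + 1) :
    ((finRotate (m+1))⁻¹ (⟨k+1, h⟩ : Fin (m+1))) = ⟨k, by omega⟩ := by
  rw [Equiv.Perm.inv_eq_iff_eq, finRotate_succ_apply]
  ext
  simp [Fin.add_def, Nat.mod_eq_of_lt h]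
end Aux

/-- Let `α` be the `m`-cycle `i ↦ i + 1` of `Fin m` and `τ : Fin m → Perm (Fin n)`.
The permutation `T` of functions `f : Fin m → Fin n` defined by
`(T f)(i) = τ(i) (f (α⁻¹ i))` has as many fixed points as the composite
permutation `τ(m−1) ∘ τ(m−2) ∘ ⋯ ∘ τ(1) ∘ τ(0)` has fixed points in `Fin n`. -/
theorem card_fixed_functions_eq_card_fixed_points (m n : ℕ) (hm : 1 ≤ m)
    (hn : 1 ≤ n) (τ : Fin m → Equiv.Perm (Fin n)) :
    Nat.card {f : Fin m → Fin n // ∀ i, τ i (f ((finRotate m)⁻¹ i)) = f i} =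
      Nat.card {x : Fin n // (List.ofFn τ).reverse.prod x = x} := by
  obtain ⟨m, rfl⟩ : ∃ m', m = m' + 1 := ⟨m - 1, by omega⟩
  apply Nat.card_congr
  refine
    { toFun := fun f => ⟨f.1 (Fin.last m), ?_⟩
      invFun := fun x => ⟨fun i => Pprod τ (i.1 + 1) x.1, ?_⟩
      left_inv := ?_
      right_inv := ?_ }
  · -- f last is a fixed point of the product
    obtain ⟨f, hf⟩ := f
    -- key: ∀ k h, f ⟨k, h⟩ = Pprod τ (k+1) (f (Fin.last m))
    have key : ∀ k (h : k < m + 1), f ⟨k, h⟩ = Pprod τ (k+1) (f (Fin.last m)) := by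
      intro k
      induction k with
      | zero =>
        intro h
        have h0 := hf 0
        rw [rot_inv_zero] at h0
        rw [Pprod_succ τ 0 h]
        simpa [Pprod] using h0.symm
      | succ k ih =>
        intro h
        have hk := hf ⟨k+1, h⟩
        rw [rot_inv_succ k h] at hk
        rw [Pprod_succ τ (k+1) h, Equiv.Perm.mul_apply, ← ih (by omega), ← hk]
    have := key m (by omega)
    rw [← Pprod_top τ]
    have hlast : (Fin.last m) = ⟨m, by omega⟩ := rfl
    rw [hlast] at this
    exact this.symm
  · -- invFun lands in fixed functions
    obtain ⟨x, hx⟩ := x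
    intro i
    rcases i with ⟨i, hi⟩
    cases i with
    | zero =>
      rw [show (⟨0, hi⟩ : Fin (m+1)) = 0 from rfl, rot_inv_zero]
      show τ 0 (Pprod τ (m+1) x) = Pprod τ (0+1) x
      rw [Pprod_top τ, hx, Pprod_succ τ 0 hi]
      simp [Pprod]
    | succ k =>
      rw [rot_inv_succ k hi]
      show τ _ (Pprod τ (k+1) x) = Pprod τ (k+1+1) x
      rw [Pprod_succ τ (k+1) hi, Equiv.Perm.mul_apply]
  · rintro ⟨f, hf⟩
    apply Subtype.ext
    funext i
    have key : ∀ k (h : k < m + 1), f ⟨k, h⟩ = Pprod τ (k+1) (f (Fin.last m)) := by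
      intro k
      induction k with
      | zero =>
        intro h
        have h0 := hf 0
        rw [rot_inv_zero] at h0
        rw [Pprod_succ τ 0 h]
        simpa [Pprod] using h0.symm
      | succ k ih =>
        intro h
        have hk := hf ⟨k+1, h⟩
        rw [rot_inv_succ k h] at hk
        rw [Pprod_succ τ (k+1) h, Equiv.Perm.mul_apply, ← ih (by omega), ← hk]
    exact (key i.1 i.2).symm
  · rintro ⟨x, hx⟩
    apply Subtype.ext
    show Pprod τ (m+1) x = x
    rw [Pprod_top τ, hx]
end
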